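/- Let δ > 0, C > 0, let σ be a real m×n matrix with σσᵀ ≥ δ·I_m and |σ| ≤ C, let μ ∈ ℝ^m with |μ| ≤ C, and let Π ⊆ ℝ^m be a nonempty closed convex cone. Define F̃(v,V) := |σᵀv|² + 2vᵀ(μ + σV) and F̃*(V) := inf_{v∈Π} F̃(v,V). Then there is a constant c₁ > 0 depending only on δ and C such that for all V, Ṽ ∈ ℝⁿ: |F̃*(V) − F̃*(Ṽ)| ≤ sup{ |2vᵀσ(V−Ṽ)| : v ∈ Π, |v| ≤ c₁(1+|V|+|Ṽ|) } ≤ 2c₁C·(1+|V|+|Ṽ|)·|V−Ṽ|. -/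

import Mathlib

open Matrix Set

/-- Euclidean norm of a vector, written via the dot product. -/
noncomputable def vecNorm {m : ℕ} (v : Fin m → ℝ) : ℝ := Real.sqrt (v ⬝ᵥ v)

/-- `F̃(v,V) := |σᵀv|² + 2vᵀ(μ + σV)`. -/
noncomputable def Ft {m n : ℕ} (σ : Matrix (Fin m) (Fin n) ℝ) (μ : Fin m → ℝ)
    (V : Fin n → ℝ) (v : Fin m → ℝ) : ℝ :=
  (σᵀ *ᵥ v) ⬝ᵥ (σᵀ *ᵥ v) + 2 * (v ⬝ᵥ (μ + σ *ᵥ V))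

lemma dot_self_nonneg' {m : ℕ} (v : Fin m → ℝ) : 0 ≤ v ⬝ᵥ v :=
  Finset.sum_nonneg fun i _ => mul_self_nonneg (v i)

lemma vecNorm_nonneg' {m : ℕ} (v : Fin m → ℝ) : 0 ≤ vecNorm v := Real.sqrt_nonneg _

lemma vecNorm_sq' {m : ℕ} (v : Fin m → ℝ) : vecNorm v ^ 2 = v ⬝ᵥ v :=
  Real.sq_sqrt (dot_self_nonneg' v)

lemma vecNorm_zero' {m : ℕ} : vecNorm (0 : Fin m → ℝ) = 0 := by
  simp [vecNorm]

lemma cs' {m : ℕ} (v w : Fin m → ℝ) : |v ⬝ᵥ w| ≤ vecNorm v * vecNorm w := by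
  have h : (v ⬝ᵥ w) ^ 2 ≤ (v ⬝ᵥ v) * (w ⬝ᵥ w) := by
    have := Finset.sum_mul_sq_le_sq_mul_sq Finset.univ v w
    simpa [dotProduct, sq, Finset.mul_sum, mul_comm, mul_left_comm] using this
  calc |v ⬝ᵥ w| = Real.sqrt ((v ⬝ᵥ w)^2) := (Real.sqrt_sq_eq_abs _).symm
    _ ≤ Real.sqrt ((v ⬝ᵥ v) * (w ⬝ᵥ w)) := Real.sqrt_le_sqrt h
    _ = vecNorm v * vecNorm w := Real.sqrt_mul (dot_self_nonneg' v) _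

lemma mulVec_bound' {m n : ℕ} (σ : Matrix (Fin m) (Fin n) ℝ) (V : Fin n → ℝ) :
    vecNorm (σ *ᵥ V) ≤ Real.sqrt (∑ i, ∑ j, σ i j ^ 2) * vecNorm V := by
  have h : (σ *ᵥ V) ⬝ᵥ (σ *ᵥ V) ≤ (∑ i, ∑ j, σ i j ^ 2) * (V ⬝ᵥ V) := by
    have hle : ∀ i : Fin m, ((σ *ᵥ V) i) * ((σ *ᵥ V) i) ≤ (∑ j, σ i j ^ 2) * (V ⬝ᵥ V) := by
      intro i
      have h2 : (σ *ᵥ V) i = ∑ j, σ i j * V j := rfl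
      have h3 : V ⬝ᵥ V = ∑ j, V j ^ 2 := by simp [dotProduct, sq]
      rw [h2, h3, ← sq]
      exact Finset.sum_mul_sq_le_sq_mul_sq Finset.univ (σ i) V
    calc (σ *ᵥ V) ⬝ᵥ (σ *ᵥ V) = ∑ i, ((σ *ᵥ V) i) * ((σ *ᵥ V) i) := rfl
      _ ≤ ∑ i : Fin m, (∑ j, σ i j ^ 2) * (V ⬝ᵥ V) := Finset.sum_le_sum fun i _ => hle i
      _ = (∑ i, ∑ j, σ i j ^ 2) * (V ⬝ᵥ V) := by rw [Finset.sum_mul]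
  calc vecNorm (σ *ᵥ V) ≤ Real.sqrt ((∑ i, ∑ j, σ i j ^ 2) * (V ⬝ᵥ V)) := Real.sqrt_le_sqrt h
    _ = _ := Real.sqrt_mul (Finset.sum_nonneg fun i _ => Finset.sum_nonneg fun j _ => sq_nonneg _) _

lemma coercive' {m n : ℕ} (δ : ℝ) (σ : Matrix (Fin m) (Fin n) ℝ)
    (hpsd : (σ * σᵀ - δ • (1 : Matrix (Fin m) (Fin m) ℝ)).PosSemidef) (v : Fin m → ℝ) :
    δ * (v ⬝ᵥ v) ≤ (σᵀ *ᵥ v) ⬝ᵥ (σᵀ *ᵥ v) := by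
  have h := hpsd.dotProduct_mulVec_nonneg v
  simp only [sub_mulVec, dotProduct_sub, star_trivial, smul_mulVec, one_mulVec,
    dotProduct_smul, smul_eq_mul] at h
  have hrw : v ⬝ᵥ ((σ * σᵀ) *ᵥ v) = (σᵀ *ᵥ v) ⬝ᵥ (σᵀ *ᵥ v) := by
    rw [← mulVec_mulVec, dotProduct_mulVec, ← mulVec_transpose]
  linarith [hrw ▸ h]

/-- with `F̃*(V) := inf_{v∈K} F̃(v,V)`, there is `c₁ > 0` (depending only on
`δ, C`) such that for all `V, Ṽ`:
`|F̃*(V) − F̃*(Ṽ)| ≤ sup{ |2vᵀσ(V−Ṽ)| : v ∈ K, |v| ≤ c₁(1+|V|+|Ṽ|) }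
  ≤ 2c₁C(1+|V|+|Ṽ|)|V−Ṽ|`. -/
theorem stmt8 {m n : ℕ} (δ C : ℝ) (hδ : 0 < δ) (hC : 0 < C)
    (σ : Matrix (Fin m) (Fin n) ℝ)
    (hpsd : (σ * σᵀ - δ • (1 : Matrix (Fin m) (Fin m) ℝ)).PosSemidef)
    (hσC : Real.sqrt (∑ i, ∑ j, σ i j ^ 2) ≤ C)
    (μ : Fin m → ℝ) (hμC : vecNorm μ ≤ C)
    (K : Set (Fin m → ℝ)) (hne : K.Nonempty) (hcl : IsClosed K) (hcv : Convex ℝ K)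
    (hcone : ∀ v ∈ K, ∀ c : ℝ, 0 ≤ c → c • v ∈ K) (h0 : (0 : Fin m → ℝ) ∈ K) :
    ∃ c₁ : ℝ, 0 < c₁ ∧
      ∀ V V' : Fin n → ℝ,
        |sInf (Ft σ μ V '' K) - sInf (Ft σ μ V' '' K)|
            ≤ sSup {x : ℝ | ∃ v ∈ K, vecNorm v ≤ c₁ * (1 + vecNorm V + vecNorm V') ∧
                x = |2 * (v ⬝ᵥ (σ *ᵥ (V - V')))|} ∧
        sSup {x : ℝ | ∃ v ∈ K, vecNorm v ≤ c₁ * (1 + vecNorm V + vecNorm V') ∧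
                x = |2 * (v ⬝ᵥ (σ *ᵥ (V - V')))|}
            ≤ 2 * c₁ * C * (1 + vecNorm V + vecNorm V') * vecNorm (V - V') := by
  refine ⟨2 * C / δ, by positivity, ?_⟩
  set c₁ : ℝ := 2 * C / δ with hc₁
  have hc₁pos : 0 < c₁ := by positivity
  have hδc₁ : δ * c₁ = 2 * C := by rw [hc₁]; field_simp
  -- quadratic lower bound on Ft
  have lower : ∀ (W : Fin n → ℝ) (v : Fin m → ℝ),
      δ * vecNorm v ^ 2 - 2 * (C * (1 + vecNorm W)) * vecNorm v ≤ Ft σ μ W v := by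
    intro W v
    have h1 : δ * (v ⬝ᵥ v) ≤ (σᵀ *ᵥ v) ⬝ᵥ (σᵀ *ᵥ v) := coercive' δ σ hpsd v
    have h2 : |v ⬝ᵥ μ| ≤ vecNorm v * C :=
      (cs' v μ).trans (mul_le_mul_of_nonneg_left hμC (vecNorm_nonneg' v))
    have h3 : |v ⬝ᵥ (σ *ᵥ W)| ≤ vecNorm v * (C * vecNorm W) := by
      refine (cs' v (σ *ᵥ W)).trans ?_
      refine mul_le_mul_of_nonneg_left ?_ (vecNorm_nonneg' v)
      exact (mulVec_bound' σ W).trans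
        (mul_le_mul_of_nonneg_right hσC (vecNorm_nonneg' W))
    have e : Ft σ μ W v
        = (σᵀ *ᵥ v) ⬝ᵥ (σᵀ *ᵥ v) + 2 * (v ⬝ᵥ μ) + 2 * (v ⬝ᵥ (σ *ᵥ W)) := by
      simp [Ft, dotProduct_add]; ring
    have hsq := vecNorm_sq' v
    nlinarith [neg_abs_le (v ⬝ᵥ μ), neg_abs_le (v ⬝ᵥ (σ *ᵥ W))]
  -- boundedness below of the images
  have bdd : ∀ W : Fin n → ℝ, BddBelow (Ft σ μ W '' K) := by
    intro W
    refine ⟨-(C * (1 + vecNorm W))^2 / δ, ?_⟩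
    rintro x ⟨v, hv, rfl⟩
    have h1 := lower W v
    have ht := vecNorm_nonneg' v
    have hWn := vecNorm_nonneg' W
    have hb : 0 ≤ C * (1 + vecNorm W) := by nlinarith
    rw [div_le_iff₀ hδ]
    nlinarith [sq_nonneg (δ * vecNorm v - C * (1 + vecNorm W))]
  have hFt0 : ∀ W : Fin n → ℝ, Ft σ μ W (0 : Fin m → ℝ) = 0 := by
    intro W; simp [Ft]
  have inf_le0 : ∀ W : Fin n → ℝ, sInf (Ft σ μ W '' K) ≤ 0 := by
    intro W
    have : (0:ℝ) ∈ Ft σ μ W '' K := ⟨0, h0, hFt0 W⟩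
    exact csInf_le (bdd W) this
  intro V V'
  set R : ℝ := c₁ * (1 + vecNorm V + vecNorm V') with hR
  have hRpos : 0 < R := by
    have := vecNorm_nonneg' V; have := vecNorm_nonneg' V'
    have h1 : (0:ℝ) < 1 + vecNorm V + vecNorm V' := by linarith
    exact mul_pos hc₁pos h1
  set A : Set ℝ := {x : ℝ | ∃ v ∈ K, vecNorm v ≤ c₁ * (1 + vecNorm V + vecNorm V') ∧
      x = |2 * (v ⬝ᵥ (σ *ᵥ (V - V')))|} with hA
  have hM : ∀ x ∈ A, x ≤ 2 * c₁ * C * (1 + vecNorm V + vecNorm V') * vecNorm (V - V') := by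
    rintro x ⟨v, hv, hvR, rfl⟩
    have h1 : |2 * (v ⬝ᵥ (σ *ᵥ (V - V')))| = 2 * |v ⬝ᵥ (σ *ᵥ (V - V'))| := by
      rw [abs_mul]; norm_num
    have h2 : |v ⬝ᵥ (σ *ᵥ (V - V'))| ≤ vecNorm v * (C * vecNorm (V - V')) := by
      refine (cs' v _).trans ?_
      refine mul_le_mul_of_nonneg_left ?_ (vecNorm_nonneg' v)
      exact (mulVec_bound' σ _).trans
        (mul_le_mul_of_nonneg_right hσC (vecNorm_nonneg' _))
    have h3 : vecNorm v * (C * vecNorm (V - V')) ≤ R * (C * vecNorm (V - V')) := by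
      exact mul_le_mul_of_nonneg_right hvR (mul_nonneg hC.le (vecNorm_nonneg' _))
    rw [h1]
    calc 2 * |v ⬝ᵥ (σ *ᵥ (V - V'))| ≤ 2 * (R * (C * vecNorm (V - V'))) := by linarith
      _ = 2 * c₁ * C * (1 + vecNorm V + vecNorm V') * vecNorm (V - V') := by
        rw [hR]; ring
  have h0A : (0:ℝ) ∈ A := by
    refine ⟨0, h0, ?_, ?_⟩
    · rw [vecNorm_zero']; exact le_of_lt hRpos
    · simp
  have hbddA : BddAbove A := ⟨_, hM⟩
  have hS0 : 0 ≤ sSup A := le_csSup hbddA h0A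
  have hsecond : sSup A ≤ 2 * c₁ * C * (1 + vecNorm V + vecNorm V') * vecNorm (V - V') :=
    csSup_le ⟨0, h0A⟩ hM
  -- the difference identity
  have hdiff : ∀ v : Fin m → ℝ,
      Ft σ μ V v - Ft σ μ V' v = 2 * (v ⬝ᵥ (σ *ᵥ (V - V'))) := by
    intro v
    simp [Ft, mulVec_sub, dotProduct_add, dotProduct_sub]
    ring
  -- positivity outside the ball
  have hpos : ∀ (W : Fin n → ℝ) (v : Fin m → ℝ), vecNorm W ≤ vecNorm V + vecNorm V' →
      R < vecNorm v → 0 ≤ Ft σ μ W v := by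
    intro W v hW htR
    have h1 := lower W v
    have ht := vecNorm_nonneg' v
    have hWn := vecNorm_nonneg' W
    have hkey : 2 * (C * (1 + vecNorm W)) ≤ δ * R := by
      have : δ * R = 2 * C * (1 + vecNorm V + vecNorm V') := by
        rw [hR, ← mul_assoc, hδc₁]
      rw [this]
      nlinarith
    have h5 : δ * R ≤ δ * vecNorm v := mul_le_mul_of_nonneg_left htR.le hδ.le
    have h6 : 0 ≤ vecNorm v * (δ * vecNorm v - 2 * (C * (1 + vecNorm W))) :=
      mul_nonneg ht (by linarith)
    nlinarith [h1, h6]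
  -- claim (a): lower bound for Ft V' by sInf of Ft V minus sSup A
  have claimA : ∀ v ∈ K, sInf (Ft σ μ V '' K) - sSup A ≤ Ft σ μ V' v := by
    intro v hv
    by_cases ht : vecNorm v ≤ R
    · have hmem : |2 * (v ⬝ᵥ (σ *ᵥ (V - V')))| ∈ A := ⟨v, hv, ht, rfl⟩
      have h1 : |2 * (v ⬝ᵥ (σ *ᵥ (V - V')))| ≤ sSup A := le_csSup hbddA hmem
      have h2 : sInf (Ft σ μ V '' K) ≤ Ft σ μ V v := csInf_le (bdd V) ⟨v, hv, rfl⟩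
      have h3 := hdiff v
      have h4 := le_abs_self (2 * (v ⬝ᵥ (σ *ᵥ (V - V'))))
      linarith
    · push_neg at ht
      have h1 : 0 ≤ Ft σ μ V' v := by
        refine hpos V' v ?_ ht
        have := vecNorm_nonneg' V; linarith
      have h2 := inf_le0 V
      linarith
  have claimB : ∀ v ∈ K, sInf (Ft σ μ V' '' K) - sSup A ≤ Ft σ μ V v := by
    intro v hv
    by_cases ht : vecNorm v ≤ R
    · have hmem : |2 * (v ⬝ᵥ (σ *ᵥ (V - V')))| ∈ A := ⟨v, hv, ht, rfl⟩
      have h1 : |2 * (v ⬝ᵥ (σ *ᵥ (V - V')))| ≤ sSup A := le_csSup hbddA hmem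
      have h2 : sInf (Ft σ μ V' '' K) ≤ Ft σ μ V' v := csInf_le (bdd V') ⟨v, hv, rfl⟩
      have h3 := hdiff v
      have h4 := neg_abs_le (2 * (v ⬝ᵥ (σ *ᵥ (V - V'))))
      linarith
    · push_neg at ht
      have h1 : 0 ≤ Ft σ μ V v := by
        refine hpos V v ?_ ht
        have := vecNorm_nonneg' V'; linarith
      have h2 := inf_le0 V'
      linarith
  have hIa : sInf (Ft σ μ V '' K) - sSup A ≤ sInf (Ft σ μ V' '' K) := by
    refine le_csInf (hne.image _) ?_
    rintro y ⟨v, hv, rfl⟩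
    exact claimA v hv
  have hIb : sInf (Ft σ μ V' '' K) - sSup A ≤ sInf (Ft σ μ V '' K) := by
    refine le_csInf (hne.image _) ?_
    rintro y ⟨v, hv, rfl⟩
    exact claimB v hv
  constructor
  · rw [abs_sub_le_iff]
    constructor <;> linarith
  · exact hsecond
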